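/- Let q ∈ ℂ with 0 < |q| < 1. The map χ ↦ (χ(α), Re(χ(z))) is a bijection from the set of characters of A_q (unital ℂ-algebra homomorphisms χ: A_q → ℂ with χ(a*) = conj(χ(a)) for all a) onto the set {(a, t) ∈ ℂ × ℝ : |a|² + t² = 1}, which is homeomorphic to the 2-sphere S². -/

import Mathlib

/-- The relations (s4rel) defining the quantum 4-sphere `S⁴_q`:
`z* = z`, `zα = αz`, `zβ = βz`, `βα = conj(q)·αβ`, `β*α = q·αβ*`, `ββ* = β*β`,
`α*α + |q|²·β*β + z² = 1`, `αα* + ββ* + z² = 1`, where `|q|² = q·conj q`. -/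
def S4Rel {A : Type*} [Ring A] [Algebra ℂ A] [StarRing A] [StarModule ℂ A]
    (q : ℂ) (α β z : A) : Prop :=
  star z = z ∧ z * α = α * z ∧ z * β = β * z ∧
    β * α = (starRingEnd ℂ) q • (α * β) ∧
    star β * α = q • (α * star β) ∧
    β * star β = star β * β ∧
    star α * α + (q * (starRingEnd ℂ) q) • (star β * β) + z ^ 2 = 1 ∧
    α * star α + β * star β + z ^ 2 = 1

/-- `A` (with marked elements `α, β, z`) is *the* universal unital complex *-algebra on
generators `α, β, z` subject to the relations (s4rel) with parameter `q`, i.e. the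
algebra `A_q` of the quantum 4-sphere `S⁴_q`: the generators satisfy the relations, and
for any unital complex *-algebra with elements satisfying the relations there is a unique
unital *-algebra homomorphism sending generators to those elements. -/
def IsUniversalS4 (q : ℂ) (A : Type) [Ring A] [Algebra ℂ A] [StarRing A]
    [StarModule ℂ A] (α β z : A) : Prop :=
  S4Rel q α β z ∧
    ∀ (B : Type) [Ring B] [Algebra ℂ B] [StarRing B] [StarModule ℂ B],
      ∀ a b c : B, S4Rel q a b c →
        ∃! φ : A →⋆ₐ[ℂ] B, φ α = a ∧ φ β = b ∧ φ z = c

/-- Values of a character on the generators of `A_q`. -/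
lemma s4_char_facts {A : Type} [Ring A] [Algebra ℂ A] [StarRing A] [StarModule ℂ A]
    (q : ℂ) (h1 : ‖q‖ < 1) (α β z : A) (hrel : S4Rel q α β z)
    (χ : A →ₐ[ℂ] ℂ) (hχ : ∀ a : A, χ (star a) = (starRingEnd ℂ) (χ a)) :
    χ β = 0 ∧ (χ z).im = 0 ∧ ‖χ α‖ ^ 2 + (χ z).re ^ 2 = 1 := by
  obtain ⟨hz, -, -, -, -, -, hs1, hs2⟩ := hrel
  set a := χ α with ha
  set b := χ β with hb
  set t := χ z with ht
  have htim : t.im = 0 := by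
    have : (starRingEnd ℂ) t = t := by rw [ht, ← hχ, hz]
    exact Complex.conj_eq_iff_im.mp this
  have e1 : (starRingEnd ℂ) a * a + (q * (starRingEnd ℂ) q) * ((starRingEnd ℂ) b * b) + t ^ 2 = 1 := by
    have := congrArg χ hs1
    simpa [map_add, map_mul, map_pow, hχ, Algebra.smul_def, mul_assoc] using this
  have e2 : a * (starRingEnd ℂ) a + b * (starRingEnd ℂ) b + t ^ 2 = 1 := by
    have := congrArg χ hs2
    simpa [map_add, map_mul, map_pow, hχ] using this
  have hb0 : b = 0 := by
    have hsub : (q * (starRingEnd ℂ) q) * ((starRingEnd ℂ) b * b) = b * (starRingEnd ℂ) b := by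
      linear_combination e1 - e2
    rw [Complex.mul_conj, mul_comm ((starRingEnd ℂ) b) b, Complex.mul_conj] at hsub
    have hq : Complex.normSq q * Complex.normSq b = Complex.normSq b := by
      exact_mod_cast hsub
    have hq1 : Complex.normSq q < 1 := by
      rw [← Complex.sq_norm]; nlinarith [norm_nonneg q]
    have : Complex.normSq b = 0 := by nlinarith [Complex.normSq_nonneg b]
    exact Complex.normSq_eq_zero.mp this
  refine ⟨hb0, htim, ?_⟩
  rw [hb0] at e2
  have ht' : t = (t.re : ℂ) := by
    rw [← Complex.re_add_im t, htim]; simp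
  rw [Complex.mul_conj, ht'] at e2
  have : ((Complex.normSq a + t.re ^ 2 : ℝ) : ℂ) = 1 := by push_cast; linear_combination e2
  have := Complex.ofReal_eq_one.mp this
  rw [Complex.sq_norm]; linarith

/-- A star algebra homomorphism preserves the relations (s4rel). -/
lemma S4Rel.map {A B : Type} [Ring A] [Algebra ℂ A] [StarRing A] [StarModule ℂ A]
    [Ring B] [Algebra ℂ B] [StarRing B] [StarModule ℂ B]
    {q : ℂ} {α β z : A} (hrel : S4Rel q α β z) (ψ : A →⋆ₐ[ℂ] B) :
    S4Rel q (ψ α) (ψ β) (ψ z) := by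
  obtain ⟨h1, h2, h3, h4, h5, h6, h7, h8⟩ := hrel
  refine ⟨?_, ?_, ?_, ?_, ?_, ?_, ?_, ?_⟩
  · rw [← map_star, h1]
  · rw [← map_mul, ← map_mul, h2]
  · rw [← map_mul, ← map_mul, h3]
  · rw [← map_mul, h4, map_smul, map_mul]
  · rw [← map_star, ← map_mul, h5, map_smul, map_mul, map_star]
  · rw [← map_star, ← map_mul, ← map_mul, h6]
  · have := congrArg ψ h7
    simpa [map_add, map_mul, map_smul, map_pow, map_star] using this
  · have := congrArg ψ h8
    simpa [map_add, map_mul, map_pow, map_star] using this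

/-- The explicit equivalence between the classical part of `S⁴_q` and the unit sphere
in `ℝ³`. -/
noncomputable def s4SphEquiv :
    ({p : ℂ × ℝ // ‖p.1‖ ^ 2 + p.2 ^ 2 = 1}) ≃
      Metric.sphere (0 : EuclideanSpace ℝ (Fin 3)) 1 where
  toFun p := ⟨(WithLp.equiv 2 (Fin 3 → ℝ)).symm ![p.1.1.re, p.1.1.im, p.1.2], by
    have hp := p.2
    rw [mem_sphere_zero_iff_norm, EuclideanSpace.norm_eq]
    rw [Fin.sum_univ_three]
    simp only [WithLp.equiv_symm_apply, PiLp.toLp_apply, WithLp.ofLp_toLp, Matrix.cons_val_zero, Matrix.cons_val_one,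
      Matrix.head_cons, Matrix.cons_val_two, Matrix.tail_cons, Real.norm_eq_abs, sq_abs]
    rw [show p.1.1.re^2 + p.1.1.im^2 + p.1.2^2 = ‖p.1.1‖^2 + p.1.2^2 by
      rw [Complex.sq_norm, Complex.normSq_apply]; ring, hp, Real.sqrt_one]⟩
  invFun v := ⟨(⟨v.1 0, v.1 1⟩, v.1 2), by
    have hv := v.2
    rw [mem_sphere_zero_iff_norm, EuclideanSpace.norm_eq, Fin.sum_univ_three] at hv
    have h0 : (0:ℝ) ≤ ‖v.1 0‖^2 + ‖v.1 1‖^2 + ‖v.1 2‖^2 := by positivity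
    have := Real.sqrt_eq_one.mp hv
    simp only [Real.norm_eq_abs, sq_abs] at this
    simp only [Set.mem_setOf_eq, Complex.sq_norm, Complex.normSq_mk]
    rw [show (v.1 0)*(v.1 0) = (v.1 0)^2 by ring, show (v.1 1)*(v.1 1) = (v.1 1)^2 by ring]
    linarith⟩
  left_inv p := by
    ext <;> simp [WithLp.equiv_symm_apply]
  right_inv v := by
    ext i
    fin_cases i <;> simp [WithLp.equiv_symm_apply]

/-- The classical part of `S⁴_q` is homeomorphic to `S²`. -/
noncomputable def s4SphHomeo :
    ({p : ℂ × ℝ // ‖p.1‖ ^ 2 + p.2 ^ 2 = 1}) ≃ₜ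
      Metric.sphere (0 : EuclideanSpace ℝ (Fin 3)) 1 := by
  have hcpt : IsCompact {p : ℂ × ℝ | ‖p.1‖ ^ 2 + p.2 ^ 2 = 1} := by
    apply Metric.isCompact_of_isClosed_isBounded
    · exact isClosed_eq ((continuous_norm.comp continuous_fst).pow 2 |>.add
        (continuous_snd.pow 2)) continuous_const
    · apply Bornology.IsBounded.subset (Metric.isBounded_closedBall (x := (0 : ℂ × ℝ)) (r := 1))
      rintro ⟨a, t⟩ hp
      simp only [Set.mem_setOf_eq] at hp
      have h1 : ‖a‖ ≤ 1 := by nlinarith [norm_nonneg a, sq_nonneg t]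
      have h2 : |t| ≤ 1 := by
        nlinarith [abs_nonneg t, sq_abs t, norm_nonneg a, sq_nonneg (‖a‖)]
      rw [Metric.mem_closedBall, dist_zero_right, Prod.norm_def]
      exact max_le (by simpa using h1) (by simpa using h2)
  have : CompactSpace {p : ℂ × ℝ // ‖p.1‖ ^ 2 + p.2 ^ 2 = 1} :=
    isCompact_iff_compactSpace.mp hcpt
  have hcont : Continuous s4SphEquiv := by
    apply Continuous.subtype_mk
    apply Continuous.comp (PiLp.continuous_toLp 2 (fun _ : Fin 3 => ℝ))
    apply continuous_pi
    intro i
    fin_cases i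
    · exact (Complex.continuous_re.comp (continuous_fst.comp continuous_subtype_val))
    · exact (Complex.continuous_im.comp (continuous_fst.comp continuous_subtype_val))
    · exact (continuous_snd.comp continuous_subtype_val)
  exact hcont.homeoOfEquivCompactToT2 (f := s4SphEquiv)

/-- For `0 < |q| < 1`, the map `χ ↦ (χ(α), Re χ(z))` is a bijection from
the set of characters of `A_q` onto `{(a, t) ∈ ℂ × ℝ : |a|² + t² = 1}`, a set which is
homeomorphic to the 2-sphere `S²`. -/
theorem s4_q_character_space (q : ℂ) (h0 : 0 < ‖q‖) (h1 : ‖q‖ < 1)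
    (A : Type) [Ring A] [Algebra ℂ A] [StarRing A] [StarModule ℂ A]
    (α β z : A) (h : IsUniversalS4 q A α β z) :
    Set.BijOn
      (fun χ : {χ : A →ₐ[ℂ] ℂ // ∀ a : A, χ (star a) = (starRingEnd ℂ) (χ a)} =>
        ((χ : A →ₐ[ℂ] ℂ) α, ((χ : A →ₐ[ℂ] ℂ) z).re))
      Set.univ
      {p : ℂ × ℝ | ‖p.1‖ ^ 2 + p.2 ^ 2 = 1} ∧
    Nonempty
      (({p : ℂ × ℝ // ‖p.1‖ ^ 2 + p.2 ^ 2 = 1}) ≃ₜ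
        Metric.sphere (0 : EuclideanSpace ℝ (Fin 3)) 1) := by
  obtain ⟨hrel, huniv⟩ := h
  refine ⟨⟨?_, ?_, ?_⟩, ⟨s4SphHomeo⟩⟩
  · -- maps to
    rintro χ -
    obtain ⟨-, -, hsum⟩ := s4_char_facts q h1 α β z hrel χ.1 χ.2
    exact hsum
  · -- injective
    rintro χ₁ - χ₂ - heq
    obtain ⟨hb1, him1, -⟩ := s4_char_facts q h1 α β z hrel χ₁.1 χ₁.2
    obtain ⟨hb2, him2, -⟩ := s4_char_facts q h1 α β z hrel χ₂.1 χ₂.2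
    have hα : χ₁.1 α = χ₂.1 α := congrArg Prod.fst heq
    have hz : χ₁.1 z = χ₂.1 z := by
      have hre : (χ₁.1 z).re = (χ₂.1 z).re := congrArg Prod.snd heq
      exact Complex.ext hre (by rw [him1, him2])
    set ψ₁ : A →⋆ₐ[ℂ] ℂ := { χ₁.1 with map_star' := χ₁.2 }
    set ψ₂ : A →⋆ₐ[ℂ] ℂ := { χ₂.1 with map_star' := χ₂.2 }
    have hrelC : S4Rel q (χ₁.1 α) (χ₁.1 β) (χ₁.1 z) := hrel.map ψ₁
    obtain ⟨φ, -, huniq⟩ := huniv ℂ (χ₁.1 α) (χ₁.1 β) (χ₁.1 z) hrelC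
    have e₁ : ψ₁ = φ := huniq ψ₁ ⟨rfl, rfl, rfl⟩
    have e₂ : ψ₂ = φ := huniq ψ₂ ⟨hα.symm, by
      rw [show ψ₂ β = χ₂.1 β from rfl, hb2, hb1], hz.symm⟩
    have : ψ₁ = ψ₂ := e₁.trans e₂.symm
    have hfun : ∀ x : A, χ₁.1 x = χ₂.1 x := fun x => congrArg (fun ψ => ψ x) this
    exact Subtype.ext (AlgHom.ext hfun)
  · -- surjective
    rintro ⟨a, t⟩ hp
    simp only [Set.mem_setOf_eq] at hp
    have hrelC : S4Rel q (a : ℂ) (0 : ℂ) ((t : ℝ) : ℂ) := by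
      refine ⟨Complex.conj_ofReal t, mul_comm _ _, mul_comm _ _, by simp, by simp, by simp,
        ?_, ?_⟩
      · simp only [star_zero, mul_zero, smul_zero, zero_mul, add_zero]
        rw [show (star a : ℂ) = (starRingEnd ℂ) a from rfl, mul_comm, Complex.mul_conj,
          ← Complex.ofReal_pow, ← Complex.ofReal_add, ← Complex.ofReal_one]
        norm_cast
        rw [← Complex.sq_norm]
        linarith
      · simp only [mul_zero, zero_mul, add_zero]
        rw [show (star a : ℂ) = (starRingEnd ℂ) a from rfl, Complex.mul_conj,
          ← Complex.ofReal_pow, ← Complex.ofReal_add, ← Complex.ofReal_one]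
        norm_cast
        rw [← Complex.sq_norm]
        linarith
    obtain ⟨φ, ⟨hφα, hφβ, hφz⟩, -⟩ := huniv ℂ a 0 ((t : ℝ) : ℂ) hrelC
    refine ⟨⟨φ.toAlgHom, fun x => map_star φ x⟩, Set.mem_univ _, ?_⟩
    simp only [StarAlgHom.coe_toAlgHom]
    rw [hφα, hφz]
    simp
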